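/- Let p be a real polynomial of degree k ≥ 2 and α a real root of p with p'(α) ≠ 0. Then: (i) for every real x with p(x) ≠ 0, the secant map satisfies S(x, α) = (α, α); (ii) for every real y with p(y) ≠ 0, S(α, y) = (y, α), and hence S²(α, y) = (α, α). In particular the basin of attraction of (α, α) contains the horizontal line {(x, α) : p(x) ≠ 0} and the vertical line {(α, y) : p(y) ≠ 0}, and is therefore unbounded. -/

import Mathlib

open Polynomial Filter Topology

/-- One step of the secant method: `sec(x,y) = y − p(y)(y−x)/(p(y)−p(x))`. -/
noncomputable def secStep (p : Polynomial ℝ) (x y : ℝ) : ℝ :=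
  y - Polynomial.eval y p * (y - x) / (Polynomial.eval y p - Polynomial.eval x p)

/-- The secant map `S(x,y) = (y, sec(x,y))`. -/
noncomputable def secMap (p : Polynomial ℝ) (z : ℝ × ℝ) : ℝ × ℝ :=
  (z.2, secStep p z.1 z.2)

theorem secant_basin_lines (p : Polynomial ℝ) (hp : 2 ≤ p.natDegree) (α : ℝ)
    (hroot : p.eval α = 0) (hsimple : p.derivative.eval α ≠ 0) :
    (∀ x : ℝ, p.eval x ≠ 0 → secMap p (x, α) = (α, α)) ∧
    (∀ y : ℝ, p.eval y ≠ 0 →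
      secMap p (α, y) = (y, α) ∧ secMap p (secMap p (α, y)) = (α, α)) := by
  have h1 : ∀ x : ℝ, p.eval x ≠ 0 → secMap p (x, α) = (α, α) := by
    intro x hx
    simp [secMap, secStep, hroot, sub_eq_zero, hx]
  refine ⟨h1, fun y hy => ?_⟩
  have h2 : secMap p (α, y) = (y, α) := by
    simp only [secMap, secStep, hroot]
    field_simp
    simp only [sub_zero]
    congr 1
    rw [div_eq_iff hy]
    ring
  rw [h2]
  exact ⟨rfl, h1 y hy⟩
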